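/- Let K ≥ 1, let s_1, …, s_K and γ_1, …, γ_K be positive reals, set η_k = s_k/(1+γ_k^{-1}), and assume η_1 ≥ η_2 ≥ … ≥ η_K. Let P_tot > 0, define A(k) = Σ_{m=1}^k γ_m/√η_m and B(k) = Σ_{m=1}^k γ_m/η_m + P_tot, let K_1 ∈ {1,…,K} satisfy √η_{K_1} B(K_1)/A(K_1) − 1 > 0 and (K_1 = K or √η_{K_1+1} B(K_1+1)/A(K_1+1) − 1 ≤ 0), and set c_0 = B(K_1)/A(K_1). Define α*_k = (γ_k/s_k)(c_0 √η_k − 1) for k ≤ K_1 and α*_k = 0 for k > K_1. Then α* is feasible, i.e., α*_k ≥ 0 for all k and Σ_{k=1}^K α*_k (1+γ_k^{-1}) ≤ P_tot, and for every α ∈ ℝ^K with α_k ≥ 0 for all k and Σ_{k=1}^K α_k (1+γ_k^{-1}) ≤ P_tot, one has Σ_{k=1}^K α_k s_k/(γ_k^{-1} α_k s_k + 1) ≤ Σ_{k=1}^K α*_k s_k/(γ_k^{-1} α*_k s_k + 1); i.e., α* minimizes the BLUE distortion σ_θ^2 ( Σ_k α_k s_k/(γ_k^{-1} α_k s_k +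 1) )^{-1} subject to the sum power constraint. -/

import Mathlib

open Finset

/-- `A(k) = ∑_{m=1}^k γ_m/√η_m`. -/
noncomputable def sensA (γ η : ℕ → ℝ) (k : ℕ) : ℝ :=
  ∑ m ∈ Finset.Icc 1 k, γ m / Real.sqrt (η m)

/-- `B(k) = ∑_{m=1}^k γ_m/η_m + P_tot`. -/
noncomputable def sensB (γ η : ℕ → ℝ) (Ptot : ℝ) (k : ℕ) : ℝ :=
  (∑ m ∈ Finset.Icc 1 k, γ m / η m) + Ptot

/-- Tangent-line bound for the concave per-sensor objective `t ↦ g t e/(t e + g)`. -/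
lemma tangent_lemma (g e t u : ℝ) (hg : 0 < g) (he : 0 < e) (ht : 0 ≤ t) (hu : 0 ≤ u) :
    g*t*e/(t*e+g) ≤ g*u*e/(u*e+g) + (g^2*e/(u*e+g)^2)*(t-u) := by
  have hD : 0 < t*e+g := by positivity
  have hD' : 0 < u*e+g := by positivity
  rw [← sub_nonneg]
  have key : g*u*e/(u*e+g) + (g^2*e/(u*e+g)^2)*(t-u) - g*t*e/(t*e+g)
      = (g^2*e^2*(t-u)^2) / ((u*e+g)^2 * (t*e+g)) := by
    field_simp
    ring
  rw [key]
  positivity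

/-- Rewriting the per-sensor objective value in terms of the used power `t = a(1+g⁻¹)`. -/
lemma objval (g e a : ℝ) (hg : 0 < g) (he : 0 < e) (ha : 0 ≤ a) :
    a*(e*(1+g⁻¹))/(g⁻¹*a*(e*(1+g⁻¹))+1) = g*(a*(1+g⁻¹))*e/((a*(1+g⁻¹))*e+g) := by
  have hg1 : 0 < 1+g⁻¹ := by
    have : 0 < g⁻¹ := inv_pos.mpr hg
    linarith
  have h2 : 0 < g⁻¹*a*(e*(1+g⁻¹))+1 := by positivity
  have h3 : 0 < (a*(1+g⁻¹))*e+g := by positivity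
  rw [div_eq_div_iff h2.ne' h3.ne']
  field_simp

set_option maxHeartbeats 2000000 in
theorem stmt_14 (K : ℕ) (hK : 1 ≤ K) (s γ η : ℕ → ℝ)
    (hs : ∀ k, 1 ≤ k → k ≤ K → 0 < s k)
    (hγ : ∀ k, 1 ≤ k → k ≤ K → 0 < γ k)
    (hη : ∀ k, η k = s k / (1 + (γ k)⁻¹))
    (hrank : ∀ j k, 1 ≤ j → j ≤ k → k ≤ K → η k ≤ η j)
    (Ptot : ℝ) (hP : 0 < Ptot)
    (K₁ : ℕ) (hK₁ : K₁ ∈ Finset.Icc 1 K)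
    (hf : 0 < Real.sqrt (η K₁) * sensB γ η Ptot K₁ / sensA γ η K₁ - 1)
    (hf' : K₁ = K ∨
      Real.sqrt (η (K₁ + 1)) * sensB γ η Ptot (K₁ + 1) / sensA γ η (K₁ + 1) - 1 ≤ 0)
    (c₀ : ℝ) (hc₀ : c₀ = sensB γ η Ptot K₁ / sensA γ η K₁)
    (αopt : ℕ → ℝ)
    (hαopt : ∀ k, 1 ≤ k → k ≤ K →
      αopt k = if k ≤ K₁ then γ k / s k * (c₀ * Real.sqrt (η k) - 1) else 0) :
    (∀ k, 1 ≤ k → k ≤ K → 0 ≤ αopt k) ∧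
    (∑ k ∈ Finset.Icc 1 K, αopt k * (1 + (γ k)⁻¹) ≤ Ptot) ∧
    (∀ α : ℕ → ℝ, (∀ k, 1 ≤ k → k ≤ K → 0 ≤ α k) →
      (∑ k ∈ Finset.Icc 1 K, α k * (1 + (γ k)⁻¹) ≤ Ptot) →
      ∑ k ∈ Finset.Icc 1 K, α k * s k / ((γ k)⁻¹ * α k * s k + 1) ≤
        ∑ k ∈ Finset.Icc 1 K, αopt k * s k / ((γ k)⁻¹ * αopt k * s k + 1)) := by
  obtain ⟨hK₁1, hK₁K⟩ := Finset.mem_Icc.mp hK₁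
  -- basic positivity
  have hg1 : ∀ k, 1 ≤ k → k ≤ K → 0 < 1 + (γ k)⁻¹ := by
    intro k h1 h2
    have := inv_pos.mpr (hγ k h1 h2)
    linarith
  have hηpos : ∀ k, 1 ≤ k → k ≤ K → 0 < η k := by
    intro k h1 h2
    rw [hη k]
    exact div_pos (hs k h1 h2) (hg1 k h1 h2)
  have hsqpos : ∀ k, 1 ≤ k → k ≤ K → 0 < Real.sqrt (η k) := by
    intro k h1 h2
    exact Real.sqrt_pos.mpr (hηpos k h1 h2)
  have hsq : ∀ k, 1 ≤ k → k ≤ K → Real.sqrt (η k) * Real.sqrt (η k) = η k := by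
    intro k h1 h2
    exact Real.mul_self_sqrt (hηpos k h1 h2).le
  have hsk : ∀ k, 1 ≤ k → k ≤ K → s k = η k * (1 + (γ k)⁻¹) := by
    intro k h1 h2
    rw [hη k, div_mul_cancel₀ _ (hg1 k h1 h2).ne']
  -- positivity of A and B
  have hApos : ∀ k, 1 ≤ k → k ≤ K → 0 < sensA γ η k := by
    intro k h1 h2
    apply Finset.sum_pos
    · intro i hi
      obtain ⟨hi1, hi2⟩ := Finset.mem_Icc.mp hi
      exact div_pos (hγ i hi1 (hi2.trans h2)) (hsqpos i hi1 (hi2.trans h2))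
    · exact ⟨1, Finset.mem_Icc.mpr ⟨le_refl 1, h1⟩⟩
  have hBpos : ∀ k, 1 ≤ k → k ≤ K → 0 < sensB γ η Ptot k := by
    intro k h1 h2
    unfold sensB
    have : 0 ≤ ∑ m ∈ Finset.Icc 1 k, γ m / η m := by
      apply Finset.sum_nonneg
      intro i hi
      obtain ⟨hi1, hi2⟩ := Finset.mem_Icc.mp hi
      exact (div_pos (hγ i hi1 (hi2.trans h2)) (hηpos i hi1 (hi2.trans h2))).le
    linarith
  have hc₀pos : 0 < c₀ := by
    rw [hc₀]
    exact div_pos (hBpos K₁ hK₁1 hK₁K) (hApos K₁ hK₁1 hK₁K)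
  -- c₀ √η_{K₁} > 1
  have hfK₁ : 1 < c₀ * Real.sqrt (η K₁) := by
    have h1 : (1:ℝ) < Real.sqrt (η K₁) * sensB γ η Ptot K₁ / sensA γ η K₁ := by linarith
    rw [lt_div_iff₀ (hApos K₁ hK₁1 hK₁K)] at h1
    rw [hc₀, div_mul_eq_mul_div, lt_div_iff₀ (hApos K₁ hK₁1 hK₁K)]
    nlinarith
  -- c₀ √η_k ≥ 1 for active sensors
  have hact : ∀ k, 1 ≤ k → k ≤ K₁ → 1 ≤ c₀ * Real.sqrt (η k) := by
    intro k h1 h2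
    have hmono : Real.sqrt (η K₁) ≤ Real.sqrt (η k) :=
      Real.sqrt_le_sqrt (hrank k K₁ h1 h2 hK₁K)
    nlinarith
  -- c₀ √η_k ≤ 1 for inactive sensors
  have hinact : ∀ k, K₁ < k → k ≤ K → c₀ * Real.sqrt (η k) ≤ 1 := by
    intro k hk1 hk2
    have hK₁1K : K₁ + 1 ≤ K := by omega
    rcases hf' with hEq | hle
    · omega
    · have h1K1 : (1:ℕ) ≤ K₁ + 1 := by omega
      have hγ' := hγ (K₁+1) h1K1 hK₁1K
      have hη' := hηpos (K₁+1) h1K1 hK₁1K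
      have hx' := hsqpos (K₁+1) h1K1 hK₁1K
      have hxx' := hsq (K₁+1) h1K1 hK₁1K
      have hA' : sensA γ η (K₁+1) = sensA γ η K₁ + γ (K₁+1) / Real.sqrt (η (K₁+1)) := by
        unfold sensA
        rw [Finset.sum_Icc_succ_top (by omega : 1 ≤ K₁ + 1)]
      have hB' : sensB γ η Ptot (K₁+1) = sensB γ η Ptot K₁ + γ (K₁+1) / η (K₁+1) := by
        unfold sensB
        rw [Finset.sum_Icc_succ_top (by omega : 1 ≤ K₁ + 1)]
        ring
      have hA'pos := hApos (K₁+1) h1K1 hK₁1K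
      have hle2 : Real.sqrt (η (K₁+1)) * sensB γ η Ptot (K₁+1) ≤ sensA γ η (K₁+1) := by
        have h' : Real.sqrt (η (K₁+1)) * sensB γ η Ptot (K₁+1) / sensA γ η (K₁+1) ≤ 1 := by
          linarith
        rw [div_le_one hA'pos] at h'
        exact h'
      have hcross : Real.sqrt (η (K₁+1)) * (γ (K₁+1) / η (K₁+1)) =
          γ (K₁+1) / Real.sqrt (η (K₁+1)) := by
        rw [eq_div_iff hx'.ne']
        field_simp
        linear_combination hxx'
      have hmain : Real.sqrt (η (K₁+1)) * sensB γ η Ptot K₁ ≤ sensA γ η K₁ := by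
        rw [hA', hB'] at hle2
        nlinarith [hcross, hle2]
      have hc1 : c₀ * Real.sqrt (η (K₁+1)) ≤ 1 := by
        rw [hc₀, div_mul_eq_mul_div, div_le_one (hApos K₁ hK₁1 hK₁K)]
        nlinarith [hmain]
      have hmono : Real.sqrt (η k) ≤ Real.sqrt (η (K₁+1)) :=
        Real.sqrt_le_sqrt (hrank (K₁+1) k h1K1 (by omega) hk2)
      nlinarith [hsqpos k (by omega) hk2]
  -- nonnegativity of αopt
  have hnonneg : ∀ k, 1 ≤ k → k ≤ K → 0 ≤ αopt k := by
    intro k h1 h2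
    rw [hαopt k h1 h2]
    split
    · next h =>
      have := hact k h1 h
      have := hγ k h1 h2
      have := hs k h1 h2
      have h3 : 0 ≤ γ k / s k := by positivity
      nlinarith
    · exact le_refl 0
  -- power identity for active sensors
  have hpowterm : ∀ k, 1 ≤ k → k ≤ K₁ →
      αopt k * (1 + (γ k)⁻¹) = c₀ * (γ k / Real.sqrt (η k)) - γ k / η k := by
    intro k h1 h2
    have h2K : k ≤ K := h2.trans hK₁K
    have hγk := hγ k h1 h2K
    have hg1k := hg1 k h1 h2K
    have hXpos := hsqpos k h1 h2K
    have hE : η k = Real.sqrt (η k) * Real.sqrt (η k) := (hsq k h1 h2K).symm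
    rw [hαopt k h1 h2K, if_pos h2, hsk k h1 h2K]
    generalize hXg : Real.sqrt (η k) = X at hE hXpos ⊢
    rw [hE]
    field_simp
  -- total power used by αopt equals Ptot
  have hpow : ∑ k ∈ Finset.Icc 1 K, αopt k * (1 + (γ k)⁻¹) = Ptot := by
    have hsub : Finset.Icc 1 K₁ ⊆ Finset.Icc 1 K := Finset.Icc_subset_Icc_right hK₁K
    rw [← Finset.sum_subset hsub (by
      intro x hx hnx
      obtain ⟨hx1, hx2⟩ := Finset.mem_Icc.mp hx
      have hxK₁ : ¬ x ≤ K₁ := by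
        intro hcon
        exact hnx (Finset.mem_Icc.mpr ⟨hx1, hcon⟩)
      rw [hαopt x hx1 hx2, if_neg hxK₁, zero_mul])]
    rw [Finset.sum_congr rfl (fun k hk => by
      obtain ⟨hk1, hk2⟩ := Finset.mem_Icc.mp hk
      exact hpowterm k hk1 hk2)]
    rw [Finset.sum_sub_distrib, ← Finset.mul_sum]
    have hcA : c₀ * sensA γ η K₁ = sensB γ η Ptot K₁ := by
      rw [hc₀, div_mul_cancel₀ _ (hApos K₁ hK₁1 hK₁K).ne']
    unfold sensA sensB at *
    linarith [hcA]
  refine ⟨hnonneg, le_of_eq hpow, ?_⟩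
  -- optimality
  intro α hα hαP
  have key : ∀ k ∈ Finset.Icc 1 K,
      α k * s k / ((γ k)⁻¹ * α k * s k + 1) ≤
        αopt k * s k / ((γ k)⁻¹ * αopt k * s k + 1) +
          (1/c₀^2) * (α k * (1 + (γ k)⁻¹) - αopt k * (1 + (γ k)⁻¹)) := by
    intro k hk
    obtain ⟨h1, h2⟩ := Finset.mem_Icc.mp hk
    have hγk := hγ k h1 h2
    have hηk := hηpos k h1 h2
    have hg1k := hg1 k h1 h2
    have hak := hα k h1 h2
    have hbk := hnonneg k h1 h2
    have ht0 : 0 ≤ α k * (1 + (γ k)⁻¹) := mul_nonneg hak hg1k.le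
    have hu0 : 0 ≤ αopt k * (1 + (γ k)⁻¹) := mul_nonneg hbk hg1k.le
    have htan := tangent_lemma (γ k) (η k) (α k * (1 + (γ k)⁻¹)) (αopt k * (1 + (γ k)⁻¹))
      hγk hηk ht0 hu0
    have hOL : α k * s k / ((γ k)⁻¹ * α k * s k + 1) =
        γ k * (α k * (1 + (γ k)⁻¹)) * η k / ((α k * (1 + (γ k)⁻¹)) * η k + γ k) := by
      rw [hsk k h1 h2]
      exact objval (γ k) (η k) (α k) hγk hηk hak
    have hOR : αopt k * s k / ((γ k)⁻¹ * αopt k * s k + 1) =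
        γ k * (αopt k * (1 + (γ k)⁻¹)) * η k / ((αopt k * (1 + (γ k)⁻¹)) * η k + γ k) := by
      rw [hsk k h1 h2]
      exact objval (γ k) (η k) (αopt k) hγk hηk hbk
    rw [hOL, hOR]
    by_cases hkk : k ≤ K₁
    · -- active sensor
      have hbval : αopt k = γ k / s k * (c₀ * Real.sqrt (η k) - 1) := by
        rw [hαopt k h1 h2, if_pos hkk]
      have hXpos := hsqpos k h1 h2
      have hE : η k = Real.sqrt (η k) * Real.sqrt (η k) := (hsq k h1 h2).symm
      have hue : (αopt k * (1 + (γ k)⁻¹)) * η k + γ k = γ k * (c₀ * Real.sqrt (η k)) := by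
        rw [hbval, hsk k h1 h2]
        generalize hXg : Real.sqrt (η k) = X at hE hXpos ⊢
        rw [hE]
        field_simp
        ring
      have hslope : (γ k)^2 * η k / ((αopt k * (1 + (γ k)⁻¹)) * η k + γ k)^2 = 1/c₀^2 := by
        rw [hue]
        generalize hXg : Real.sqrt (η k) = X at hE hXpos ⊢
        rw [hE]
        field_simp
      rw [hslope] at htan
      linarith
    · -- inactive sensor
      have hbval : αopt k = 0 := by
        rw [hαopt k h1 h2, if_neg hkk]
      have hcx : c₀ * Real.sqrt (η k) ≤ 1 := hinact k (by omega) h2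
      have hec : η k ≤ 1/c₀^2 := by
        rw [le_div_iff₀ (by positivity)]
        have h1' : 0 ≤ c₀ * Real.sqrt (η k) := mul_nonneg hc₀pos.le (hsqpos k h1 h2).le
        have h2' : (c₀ * Real.sqrt (η k)) * (c₀ * Real.sqrt (η k)) ≤ 1 := by nlinarith
        have h3' : η k * c₀^2 = (c₀ * Real.sqrt (η k)) * (c₀ * Real.sqrt (η k)) := by
          linear_combination (-(c₀^2)) * (hsq k h1 h2)
        linarith
      have hDt : 0 < (α k * (1 + (γ k)⁻¹)) * η k + γ k := by positivity
      have hstep1 : γ k * (α k * (1 + (γ k)⁻¹)) * η k / ((α k * (1 + (γ k)⁻¹)) * η k + γ k)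
          ≤ η k * (α k * (1 + (γ k)⁻¹)) := by
        rw [div_le_iff₀ hDt]
        nlinarith [sq_nonneg ((α k * (1 + (γ k)⁻¹)) * η k), mul_nonneg ht0 hηk.le]
      have hstep2 : η k * (α k * (1 + (γ k)⁻¹)) ≤ (1/c₀^2) * (α k * (1 + (γ k)⁻¹)) :=
        mul_le_mul_of_nonneg_right hec ht0
      rw [hbval]
      simp only [zero_mul, mul_zero, zero_add, sub_zero, zero_div]
      linarith
  have hsum := Finset.sum_le_sum key
  have hsplit : ∑ k ∈ Finset.Icc 1 K,
      (αopt k * s k / ((γ k)⁻¹ * αopt k * s k + 1) +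
        (1/c₀^2) * (α k * (1 + (γ k)⁻¹) - αopt k * (1 + (γ k)⁻¹)))
      = (∑ k ∈ Finset.Icc 1 K, αopt k * s k / ((γ k)⁻¹ * αopt k * s k + 1)) +
        (1/c₀^2) * ((∑ k ∈ Finset.Icc 1 K, α k * (1 + (γ k)⁻¹)) -
          (∑ k ∈ Finset.Icc 1 K, αopt k * (1 + (γ k)⁻¹))) := by
    rw [Finset.sum_add_distrib, ← Finset.mul_sum, Finset.sum_sub_distrib]
  rw [hsplit] at hsum
  have hc2 : (0:ℝ) < 1/c₀^2 := by positivity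
  have hdiff : (∑ k ∈ Finset.Icc 1 K, α k * (1 + (γ k)⁻¹)) -
      (∑ k ∈ Finset.Icc 1 K, αopt k * (1 + (γ k)⁻¹)) ≤ 0 := by
    rw [hpow]
    linarith
  have hlast : (1/c₀^2) * ((∑ k ∈ Finset.Icc 1 K, α k * (1 + (γ k)⁻¹)) -
      (∑ k ∈ Finset.Icc 1 K, αopt k * (1 + (γ k)⁻¹))) ≤ 0 :=
    mul_nonpos_of_nonneg_of_nonpos hc2.le hdiff
  linarith
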